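/- Let V be a finite-dimensional real vector space with a positive definite inner product ⟨·,·⟩. Every algebraic curvature tensor R on V is a finite linear combination of tensors R_ψ, where ψ ranges over ⟨·,·⟩-self-adjoint linear maps V → V; i.e. the tensors R_ψ span the vector space of algebraic curvature tensors on V. -/

import Mathlib

set_option maxHeartbeats 1600000 in
/-- Over a positive definite inner product space, every algebraic curvature
tensor is a finite linear combination of the tensors R_ψ with ψ self-adjoint. -/
theorem stmt17 {V : Type*} [AddCommGroup V] [Module ℝ V] [FiniteDimensional ℝ V]
    (B : V →ₗ[ℝ] V →ₗ[ℝ] ℝ)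
    (hBsymm : ∀ x y, B x y = B y x)
    (hBpos : ∀ x, x ≠ 0 → 0 < B x x)
    (R : V →ₗ[ℝ] V →ₗ[ℝ] V →ₗ[ℝ] V →ₗ[ℝ] ℝ)
    (hR1 : ∀ x y z w, R x y z w = -R y x z w)
    (hR2 : ∀ x y z w, R x y z w = R z w x y)
    (hR3 : ∀ x y z w, R x y z w + R y z x w + R z x y w = 0) :
    ∃ (N : ℕ) (c : Fin N → ℝ) (ψ : Fin N → (V →ₗ[ℝ] V)),
      (∀ i, ∀ x y, B (ψ i x) y = B x (ψ i y)) ∧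
      (∀ x y z w, R x y z w =
        ∑ i, c i * (B (ψ i x) w * B (ψ i y) z - B (ψ i x) z * B (ψ i y) w)) := by
  classical
  -- derived symmetry: flip in the second pair
  have flip2 : ∀ a b c d, R a b c d = -R a b d c := fun a b c d => by
    linear_combination hR2 a b c d + hR1 c d a b - hR2 d c a b
  have hflip : ∀ a b c d, R a b c d = R b a d c := fun a b c d => by
    linear_combination hR1 a b c d - flip2 b a c d
  set n := Module.finrank ℝ V with hn
  let b : Module.Basis (Fin n) ℝ V := Module.finBasis ℝ V
  -- B is bijective as a map to the dual
  have hBinj : Function.Injective B := by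
    rw [injective_iff_map_eq_zero]
    intro u hu
    by_contra h0
    have hp := hBpos u h0
    rw [hu] at hp
    simp at hp
  have hBsurj : Function.Surjective B := by
    have hd : Module.finrank ℝ (V →ₗ[ℝ] ℝ) = Module.finrank ℝ V :=
      Subspace.dual_finrank_eq (K := ℝ) (V := V)
    exact (LinearMap.injective_iff_surjective_of_finrank_eq_finrank hd.symm).mp hBinj
  let E : V ≃ₗ[ℝ] (V →ₗ[ℝ] ℝ) := LinearEquiv.ofBijective B ⟨hBinj, hBsurj⟩
  have hE : ∀ (f : V →ₗ[ℝ] ℝ) (u : V), B (E.symm f) u = f u := by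
    intro f u
    have : B (E.symm f) = f := E.apply_symm_apply f
    rw [this]
  -- the elementary symmetric bilinear forms
  let σ : Fin n → Fin n → (V →ₗ[ℝ] V →ₗ[ℝ] ℝ) := fun i j =>
    (b.coord i).smulRight (b.coord j) + (b.coord j).smulRight (b.coord i)
  have hσ : ∀ i j (u v : V), σ i j u v = b.repr u i * b.repr v j + b.repr u j * b.repr v i := by
    intro i j u v
    simp [σ, smul_eq_mul, Module.Basis.coord_apply]
  -- the symmetrized tensor components
  let Sv : Fin n → Fin n → Fin n → Fin n → ℝ := fun i j k l =>
    R (b i) (b k) (b j) (b l) + R (b i) (b l) (b j) (b k)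
  have Svsymm1 : ∀ i j k l, Sv j i k l = Sv i j k l := by
    intro i j k l
    show R (b j) (b k) (b i) (b l) + R (b j) (b l) (b i) (b k)
      = R (b i) (b k) (b j) (b l) + R (b i) (b l) (b j) (b k)
    rw [hR2 (b j) (b k) (b i) (b l), hR2 (b j) (b l) (b i) (b k)]
    ring
  have Svsymm2 : ∀ i j k l, Sv i j l k = Sv i j k l := fun i j k l => add_comm _ _
  have Svsymm3 : ∀ i j k l, Sv k l i j = Sv i j k l := by
    intro i j k l
    show R (b k) (b i) (b l) (b j) + R (b k) (b j) (b l) (b i)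
      = R (b i) (b k) (b j) (b l) + R (b i) (b l) (b j) (b k)
    have h1 : R (b k) (b i) (b l) (b j) = R (b i) (b k) (b j) (b l) := hflip _ _ _ _
    have h2 : R (b k) (b j) (b l) (b i) = R (b j) (b k) (b i) (b l) := hflip _ _ _ _
    rw [h1, h2, hR2 (b j) (b k) (b i) (b l)]
  -- index type
  let Φ : (Fin n × Fin n × Fin n × Fin n) × Fin 2 → (V →ₗ[ℝ] V →ₗ[ℝ] ℝ) := fun q =>
    if q.2 = 0 then σ q.1.1 q.1.2.1 + σ q.1.2.2.1 q.1.2.2.2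
    else σ q.1.1 q.1.2.1 - σ q.1.2.2.1 q.1.2.2.2
  let coef : (Fin n × Fin n × Fin n × Fin n) × Fin 2 → ℝ := fun q =>
    if q.2 = 0 then -(Sv q.1.1 q.1.2.1 q.1.2.2.1 q.1.2.2.2) / 48
    else (Sv q.1.1 q.1.2.1 q.1.2.2.1 q.1.2.2.2) / 48
  let e : Fin (Fintype.card ((Fin n × Fin n × Fin n × Fin n) × Fin 2)) ≃ ((Fin n × Fin n × Fin n × Fin n) × Fin 2) := (Fintype.equivFin _).symm
  refine ⟨Fintype.card ((Fin n × Fin n × Fin n × Fin n) × Fin 2), fun m => coef (e m), fun m => E.symm.toLinearMap ∘ₗ Φ (e m), ?_, ?_⟩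
  · -- self-adjointness
    intro m x y
    have hΦsymm : ∀ (q : (Fin n × Fin n × Fin n × Fin n) × Fin 2) (u v : V), Φ q u v = Φ q v u := by
      intro q u v
      by_cases h : q.2 = 0 <;>
        simp [Φ, h, LinearMap.add_apply, LinearMap.sub_apply, hσ] <;> ring
    calc B ((E.symm.toLinearMap ∘ₗ Φ (e m)) x) y = Φ (e m) x y := hE _ _
      _ = Φ (e m) y x := hΦsymm _ _ _
      _ = B ((E.symm.toLinearMap ∘ₗ Φ (e m)) y) x := (hE _ _).symm
      _ = B x ((E.symm.toLinearMap ∘ₗ Φ (e m)) y) := hBsymm _ _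
  · -- the decomposition identity
    intro x y z w
    have hval : ∀ (q : (Fin n × Fin n × Fin n × Fin n) × Fin 2) (u v : V), B ((E.symm.toLinearMap ∘ₗ Φ q) u) v = Φ q u v :=
      fun q u v => hE (Φ q u) v
    -- basis expansion of R
    have p1 : ∀ u v s t : V, R u v s t = ∑ i, b.repr u i * R (b i) v s t := by
      intro u v s t
      conv_lhs => rw [← b.sum_repr u]
      simp [-Module.Basis.sum_repr, map_sum, map_smul, LinearMap.sum_apply, LinearMap.smul_apply]
    have p2 : ∀ u v s t : V, R u v s t = ∑ i, b.repr v i * R u (b i) s t := by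
      intro u v s t
      conv_lhs => rw [← b.sum_repr v]
      simp [-Module.Basis.sum_repr, map_sum, map_smul, LinearMap.sum_apply, LinearMap.smul_apply]
    have p3 : ∀ u v s t : V, R u v s t = ∑ i, b.repr s i * R u v (b i) t := by
      intro u v s t
      conv_lhs => rw [← b.sum_repr s]
      simp [-Module.Basis.sum_repr, map_sum, map_smul, LinearMap.sum_apply, LinearMap.smul_apply]
    have p4 : ∀ u v s t : V, R u v s t = ∑ i, b.repr t i * R u v s (b i) := by
      intro u v s t
      conv_lhs => rw [← b.sum_repr t]
      simp [-Module.Basis.sum_repr, map_sum, map_smul, LinearMap.sum_apply, LinearMap.smul_apply]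
    have expand4 : ∀ u v s t : V, R u v s t = ∑ i, ∑ j, ∑ k, ∑ l,
        b.repr u i * b.repr v j * b.repr s k * b.repr t l * R (b i) (b j) (b k) (b l) := by
      intro u v s t
      rw [p1]
      refine Finset.sum_congr rfl fun i _ => ?_
      rw [p2]; simp only [Finset.mul_sum]
      refine Finset.sum_congr rfl fun j _ => ?_
      rw [p3]; simp only [Finset.mul_sum]
      refine Finset.sum_congr rfl fun k _ => ?_
      rw [p4]; simp only [Finset.mul_sum]
      refine Finset.sum_congr rfl fun l _ => ?_
      ring
    have expand4P : ∀ u v s t : V, R u v s t = ∑ p : Fin n × Fin n × Fin n × Fin n,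
        b.repr u p.1 * b.repr v p.2.1 * b.repr s p.2.2.1 * b.repr t p.2.2.2 *
          R (b p.1) (b p.2.1) (b p.2.2.1) (b p.2.2.2) := by
      intro u v s t
      rw [expand4 u v s t]
      simp only [Fintype.sum_prod_type]
    have TvalA : ∀ u v s t : V, (∑ p : Fin n × Fin n × Fin n × Fin n,
        b.repr u p.1 * b.repr v p.2.1 * b.repr s p.2.2.1 * b.repr t p.2.2.2 *
          R (b p.1) (b p.2.2.1) (b p.2.1) (b p.2.2.2)) = R u s v t := by
      intro u v s t
      rw [expand4P u s v t]
      refine Fintype.sum_equiv ⟨fun p => (p.1, p.2.2.1, p.2.1, p.2.2.2),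
        fun p => (p.1, p.2.2.1, p.2.1, p.2.2.2),
        fun ⟨i, j, k, l⟩ => rfl, fun ⟨i, j, k, l⟩ => rfl⟩ _ _ ?_
      rintro ⟨i, j, k, l⟩
      dsimp
      ring
    have TvalB : ∀ u v s t : V, (∑ p : Fin n × Fin n × Fin n × Fin n,
        b.repr u p.1 * b.repr v p.2.1 * b.repr s p.2.2.1 * b.repr t p.2.2.2 *
          R (b p.1) (b p.2.2.2) (b p.2.1) (b p.2.2.1)) = R u t v s := by
      intro u v s t
      rw [expand4P u t v s]
      refine Fintype.sum_equiv ⟨fun p => (p.1, p.2.2.2, p.2.1, p.2.2.1),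
        fun p => (p.1, p.2.2.1, p.2.2.2, p.2.1),
        fun ⟨i, j, k, l⟩ => rfl, fun ⟨i, j, k, l⟩ => rfl⟩ _ _ ?_
      rintro ⟨i, j, k, l⟩
      dsimp
      ring
    have Tval : ∀ u v s t : V, (∑ p : Fin n × Fin n × Fin n × Fin n,
        Sv p.1 p.2.1 p.2.2.1 p.2.2.2 *
          (b.repr u p.1 * b.repr v p.2.1 * b.repr s p.2.2.1 * b.repr t p.2.2.2))
        = R u s v t + R u t v s := by
      intro u v s t
      rw [← TvalA u v s t, ← TvalB u v s t, ← Finset.sum_add_distrib]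
      exact Finset.sum_congr rfl fun p _ => by dsimp [Sv]; ring
    have keyA : ∀ u v s t : V, (∑ p : Fin n × Fin n × Fin n × Fin n,
        Sv p.1 p.2.1 p.2.2.1 p.2.2.2 * (σ p.1 p.2.1 u v * σ p.2.2.1 p.2.2.2 s t))
        = 4 * (R u s v t + R u t v s) := by
      intro u v s t
      have hexp : ∀ p : Fin n × Fin n × Fin n × Fin n,
          Sv p.1 p.2.1 p.2.2.1 p.2.2.2 * (σ p.1 p.2.1 u v * σ p.2.2.1 p.2.2.2 s t)
          = Sv p.1 p.2.1 p.2.2.1 p.2.2.2 *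
              (b.repr u p.1 * b.repr v p.2.1 * b.repr s p.2.2.1 * b.repr t p.2.2.2)
          + Sv p.1 p.2.1 p.2.2.1 p.2.2.2 *
              (b.repr u p.2.1 * b.repr v p.1 * b.repr s p.2.2.1 * b.repr t p.2.2.2)
          + Sv p.1 p.2.1 p.2.2.1 p.2.2.2 *
              (b.repr u p.1 * b.repr v p.2.1 * b.repr s p.2.2.2 * b.repr t p.2.2.1)
          + Sv p.1 p.2.1 p.2.2.1 p.2.2.2 *
              (b.repr u p.2.1 * b.repr v p.1 * b.repr s p.2.2.2 * b.repr t p.2.2.1) := by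
        intro p
        rw [hσ, hσ]
        ring
      rw [Finset.sum_congr rfl fun p _ => hexp p, Finset.sum_add_distrib,
        Finset.sum_add_distrib, Finset.sum_add_distrib]
      have h2 : (∑ p : Fin n × Fin n × Fin n × Fin n,
          Sv p.1 p.2.1 p.2.2.1 p.2.2.2 *
            (b.repr u p.2.1 * b.repr v p.1 * b.repr s p.2.2.1 * b.repr t p.2.2.2))
          = R u s v t + R u t v s := by
        rw [← Tval u v s t]
        refine Fintype.sum_equiv ⟨fun p => (p.2.1, p.1, p.2.2.1, p.2.2.2),
          fun p => (p.2.1, p.1, p.2.2.1, p.2.2.2),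
          fun ⟨i, j, k, l⟩ => rfl, fun ⟨i, j, k, l⟩ => rfl⟩ _ _ ?_
        rintro ⟨i, j, k, l⟩
        dsimp
        rw [Svsymm1]
      have h3 : (∑ p : Fin n × Fin n × Fin n × Fin n,
          Sv p.1 p.2.1 p.2.2.1 p.2.2.2 *
            (b.repr u p.1 * b.repr v p.2.1 * b.repr s p.2.2.2 * b.repr t p.2.2.1))
          = R u s v t + R u t v s := by
        rw [← Tval u v s t]
        refine Fintype.sum_equiv ⟨fun p => (p.1, p.2.1, p.2.2.2, p.2.2.1),
          fun p => (p.1, p.2.1, p.2.2.2, p.2.2.1),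
          fun ⟨i, j, k, l⟩ => rfl, fun ⟨i, j, k, l⟩ => rfl⟩ _ _ ?_
        rintro ⟨i, j, k, l⟩
        dsimp
        rw [Svsymm2]
      have h4 : (∑ p : Fin n × Fin n × Fin n × Fin n,
          Sv p.1 p.2.1 p.2.2.1 p.2.2.2 *
            (b.repr u p.2.1 * b.repr v p.1 * b.repr s p.2.2.2 * b.repr t p.2.2.1))
          = R u s v t + R u t v s := by
        rw [← Tval u v s t]
        refine Fintype.sum_equiv ⟨fun p => (p.2.1, p.1, p.2.2.2, p.2.2.1),
          fun p => (p.2.1, p.1, p.2.2.2, p.2.2.1),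
          fun ⟨i, j, k, l⟩ => rfl, fun ⟨i, j, k, l⟩ => rfl⟩ _ _ ?_
        rintro ⟨i, j, k, l⟩
        dsimp
        rw [Svsymm1, Svsymm2]
      rw [Tval u v s t, h2, h3, h4]
      ring
    have keyB : ∀ u v s t : V, (∑ p : Fin n × Fin n × Fin n × Fin n,
        Sv p.1 p.2.1 p.2.2.1 p.2.2.2 * (σ p.2.2.1 p.2.2.2 u v * σ p.1 p.2.1 s t))
        = 4 * (R u s v t + R u t v s) := by
      intro u v s t
      rw [← keyA u v s t]
      refine Fintype.sum_equiv ⟨fun p => (p.2.2.1, p.2.2.2, p.1, p.2.1),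
        fun p => (p.2.2.1, p.2.2.2, p.1, p.2.1),
        fun ⟨i, j, k, l⟩ => rfl, fun ⟨i, j, k, l⟩ => rfl⟩ _ _ ?_
      rintro ⟨i, j, k, l⟩
      dsimp
      rw [Svsymm3]
    have hIsplit : (∑ q : (Fin n × Fin n × Fin n × Fin n) × Fin 2,
        coef q * (Φ q x w * Φ q y z - Φ q x z * Φ q y w))
        = ∑ p : Fin n × Fin n × Fin n × Fin n,
          (-(Sv p.1 p.2.1 p.2.2.1 p.2.2.2)/24 *
            (σ p.1 p.2.1 x w * σ p.2.2.1 p.2.2.2 y z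
              + σ p.2.2.1 p.2.2.2 x w * σ p.1 p.2.1 y z
              - σ p.1 p.2.1 x z * σ p.2.2.1 p.2.2.2 y w
              - σ p.2.2.1 p.2.2.2 x z * σ p.1 p.2.1 y w)) := by
      rw [Fintype.sum_prod_type]
      refine Finset.sum_congr rfl fun p _ => ?_
      rw [Fin.sum_univ_two]
      simp only [Φ, coef]
      norm_num [LinearMap.add_apply, LinearMap.sub_apply]
      ring
    calc R x y z w
        = (-(1:ℝ)/24) *
            ((∑ p : Fin n × Fin n × Fin n × Fin n, Sv p.1 p.2.1 p.2.2.1 p.2.2.2 *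
                (σ p.1 p.2.1 x w * σ p.2.2.1 p.2.2.2 y z))
              + (∑ p : Fin n × Fin n × Fin n × Fin n, Sv p.1 p.2.1 p.2.2.1 p.2.2.2 *
                (σ p.2.2.1 p.2.2.2 x w * σ p.1 p.2.1 y z))
              - (∑ p : Fin n × Fin n × Fin n × Fin n, Sv p.1 p.2.1 p.2.2.1 p.2.2.2 *
                (σ p.1 p.2.1 x z * σ p.2.2.1 p.2.2.2 y w))
              - (∑ p : Fin n × Fin n × Fin n × Fin n, Sv p.1 p.2.1 p.2.2.1 p.2.2.2 *
                (σ p.2.2.1 p.2.2.2 x z * σ p.1 p.2.1 y w))) := by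
          rw [keyA x w y z, keyB x w y z, keyA x z y w, keyB x z y w]
          linarith [flip2 x y w z, flip2 x z w y, hR3 x z y w, hR2 z y x w, hR1 y x z w]
      _ = ∑ p : Fin n × Fin n × Fin n × Fin n,
            (-(Sv p.1 p.2.1 p.2.2.1 p.2.2.2)/24 *
              (σ p.1 p.2.1 x w * σ p.2.2.1 p.2.2.2 y z
                + σ p.2.2.1 p.2.2.2 x w * σ p.1 p.2.1 y z
                - σ p.1 p.2.1 x z * σ p.2.2.1 p.2.2.2 y w
                - σ p.2.2.1 p.2.2.2 x z * σ p.1 p.2.1 y w)) := by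
          rw [← Finset.sum_add_distrib, ← Finset.sum_sub_distrib, ← Finset.sum_sub_distrib,
            Finset.mul_sum]
          exact Finset.sum_congr rfl fun p _ => by ring
      _ = ∑ q : (Fin n × Fin n × Fin n × Fin n) × Fin 2,
            coef q * (Φ q x w * Φ q y z - Φ q x z * Φ q y w) := hIsplit.symm
      _ = ∑ m, coef (e m) * (B ((E.symm.toLinearMap ∘ₗ Φ (e m)) x) w *
              B ((E.symm.toLinearMap ∘ₗ Φ (e m)) y) z -
            B ((E.symm.toLinearMap ∘ₗ Φ (e m)) x) z *
              B ((E.symm.toLinearMap ∘ₗ Φ (e m)) y) w) := by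
          refine (Fintype.sum_equiv e _ _ fun m => ?_).symm
          rw [hval, hval, hval, hval]
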